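/- If the signed area satisfies A > 0 and the stabilization parameter satisfies τ > 0, then the kernel of the first-order VEM element stiffness matrix K is exactly the span of the all-ones vector 𝟙 ∈ ℝ^N. Consequently, 0 is an eigenvalue of K of multiplicity exactly one, and all remaining eigenvalues of K are strictly positive. -/

import Mathlib

open Matrix Real Filter

noncomputable section

/-- The boundary-integral vectors `a_i = (1/2)·(y_{i+1} − y_{i−1}, x_{i−1} − x_{i+1})`
of a planar polygon with cyclically indexed vertex coordinates. -/
def aVec (N : ℕ) (x y : ZMod N → ℝ) (i : ZMod N) : Fin 2 → ℝ :=
  ![(y (i + 1) - y (i - 1)) / 2, (x (i - 1) - x (i + 1)) / 2]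

/-- The signed (shoelace) area `A = (1/2)·Σ_i (x_i y_{i+1} − x_{i+1} y_i)`. -/
def shoelace (N : ℕ) [NeZero N] (x y : ZMod N → ℝ) : ℝ :=
  (1 / 2) * ∑ i : ZMod N, (x i * y (i + 1) - x (i + 1) * y i)

/-- The `3×N` matrix `B` of the first-order VEM. -/
def Bmat (N : ℕ) (x y : ZMod N → ℝ) (h : ℝ) : Matrix (Fin 3) (ZMod N) ℝ :=
  Matrix.of fun α i => ![(1 : ℝ) / N, aVec N x y i 0 / h, aVec N x y i 1 / h] α

/-- The `N×3` matrix `D` of the first-order VEM, `D_{iα} = m_α(x_i, y_i)` with scaled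
monomials `m₁ = 1`, `m₂ = (x − x_K)/h`, `m₃ = (y − y_K)/h`. -/
def Dmat (N : ℕ) (x y : ZMod N → ℝ) (h xK yK : ℝ) : Matrix (ZMod N) (Fin 3) ℝ :=
  Matrix.of fun i α => ![(1 : ℝ), (x i - xK) / h, (y i - yK) / h] α

/-- `G = diag(1, A/h², A/h²)`. -/
def Gmat (N : ℕ) [NeZero N] (x y : ZMod N → ℝ) (h : ℝ) : Matrix (Fin 3) (Fin 3) ℝ :=
  Matrix.diagonal ![1, shoelace N x y / h ^ 2, shoelace N x y / h ^ 2]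

/-- `G̃ = diag(0, A/h², A/h²)`. -/
def Gtil (N : ℕ) [NeZero N] (x y : ZMod N → ℝ) (h : ℝ) : Matrix (Fin 3) (Fin 3) ℝ :=
  Matrix.diagonal ![0, shoelace N x y / h ^ 2, shoelace N x y / h ^ 2]

/-- `Π* = G⁻¹·B`. -/
def PiStar (N : ℕ) [NeZero N] (x y : ZMod N → ℝ) (h : ℝ) : Matrix (Fin 3) (ZMod N) ℝ :=
  (Gmat N x y h)⁻¹ * Bmat N x y h

/-- `Π = D·Π*`. -/
def PiMat (N : ℕ) [NeZero N] (x y : ZMod N → ℝ) (h xK yK : ℝ) :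
    Matrix (ZMod N) (ZMod N) ℝ :=
  Dmat N x y h xK yK * PiStar N x y h

/-- The consistency part `K^consis = Π*ᵀ·G̃·Π*` of the VEM element stiffness matrix. -/
def Kconsis (N : ℕ) [NeZero N] (x y : ZMod N → ℝ) (h : ℝ) :
    Matrix (ZMod N) (ZMod N) ℝ :=
  (PiStar N x y h)ᵀ * Gtil N x y h * PiStar N x y h

/-- The first-order VEM element stiffness matrix
`K = Π*ᵀ·G̃·Π* + τ·(I − Π)ᵀ·(I − Π)`. -/
def Kmat (N : ℕ) [NeZero N] (x y : ZMod N → ℝ) (h τ xK yK : ℝ) :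
    Matrix (ZMod N) (ZMod N) ℝ :=
  Kconsis N x y h +
    τ • ((1 - PiMat N x y h xK yK)ᵀ * (1 - PiMat N x y h xK yK))

-- Auxiliary lemmas

lemma sum_shift_add (N : ℕ) [NeZero N] (f : ZMod N → ℝ) (c : ZMod N) :
    ∑ i : ZMod N, f (i + c) = ∑ i : ZMod N, f i :=
  Fintype.sum_equiv (Equiv.addRight c) _ _ (fun _ => rfl)
lemma sum_shift_sub (N : ℕ) [NeZero N] (f : ZMod N → ℝ) (c : ZMod N) :
    ∑ i : ZMod N, f (i - c) = ∑ i : ZMod N, f i :=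
  Fintype.sum_equiv (Equiv.subRight c) _ _ (fun _ => rfl)

lemma sum_cyc (N : ℕ) [NeZero N] (f : ZMod N → ℝ) :
    ∑ i : ZMod N, (f (i + 1) - f (i - 1)) / 2 = 0 := by
  rw [← Finset.sum_div, Finset.sum_sub_distrib, sum_shift_add N f 1, sum_shift_sub N f 1]
  simp

lemma sum_cyc' (N : ℕ) [NeZero N] (f : ZMod N → ℝ) :
    ∑ i : ZMod N, (f (i - 1) - f (i + 1)) / 2 = 0 := by
  rw [← Finset.sum_div, Finset.sum_sub_distrib, sum_shift_add N f 1, sum_shift_sub N f 1]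
  simp

lemma sum_aVec (N : ℕ) [NeZero N] (x y : ZMod N → ℝ) (j : Fin 2) :
    ∑ i : ZMod N, aVec N x y i j = 0 := by
  fin_cases j
  · simpa only [aVec, Fin.zero_eta, Matrix.cons_val_zero] using sum_cyc N y
  · simpa only [aVec, Fin.mk_one, Matrix.cons_val_one, Matrix.head_cons, Matrix.cons_val_zero] using sum_cyc' N x

lemma Ginv_eq (N : ℕ) [NeZero N] (x y : ZMod N → ℝ) (h : ℝ) (hh : h ≠ 0)
    (hA : shoelace N x y ≠ 0) :
    (Gmat N x y h)⁻¹ =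
      Matrix.diagonal ![1, h ^ 2 / shoelace N x y, h ^ 2 / shoelace N x y] := by
  apply Matrix.inv_eq_right_inv
  rw [Gmat, Matrix.diagonal_mul_diagonal]
  have key : (fun i => ![1, shoelace N x y / h ^ 2, shoelace N x y / h ^ 2] i *
      ![1, h ^ 2 / shoelace N x y, h ^ 2 / shoelace N x y] i) = (fun _ => (1:ℝ)) := by
    funext α
    fin_cases α <;> simp <;> field_simp
  rw [key]
  exact Matrix.diagonal_one

lemma bmat_mulVec_one (N : ℕ) [NeZero N] (x y : ZMod N → ℝ) (h : ℝ) :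
    Bmat N x y h *ᵥ (fun _ => 1) = ![1, 0, 0] := by
  have hN : (N : ℝ) ≠ 0 := Nat.cast_ne_zero.mpr (NeZero.ne N)
  funext α
  fin_cases α
  · simp [Matrix.mulVec, dotProduct, Bmat, Finset.sum_const, ZMod.card, nsmul_eq_mul]
  · show ∑ i : ZMod N, Bmat N x y h 1 i * 1 = 0
    simp only [Bmat, Matrix.of_apply, mul_one, Matrix.cons_val_one, Matrix.head_cons,
      Matrix.cons_val_zero]
    rw [← Finset.sum_div, sum_aVec N x y 0]
    simp
  · show ∑ i : ZMod N, Bmat N x y h 2 i * 1 = 0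
    simp only [Bmat, Matrix.of_apply, mul_one, Matrix.cons_val_two, Matrix.tail_cons,
      Matrix.head_cons]
    rw [← Finset.sum_div, sum_aVec N x y 1]
    simp

lemma piStar_mulVec (N : ℕ) [NeZero N] (x y : ZMod N → ℝ) (h : ℝ) (hh : h ≠ 0)
    (hA : shoelace N x y ≠ 0) (v : ZMod N → ℝ) (α : Fin 3) :
    (PiStar N x y h *ᵥ v) α =
      ![1, h ^ 2 / shoelace N x y, h ^ 2 / shoelace N x y] α * (Bmat N x y h *ᵥ v) α := by
  rw [PiStar, ← Matrix.mulVec_mulVec, Ginv_eq N x y h hh hA, Matrix.mulVec_diagonal]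

lemma quad_form (N : ℕ) [NeZero N] (x y : ZMod N → ℝ) (h τ xK yK : ℝ) (v : ZMod N → ℝ) :
    v ⬝ᵥ (Kmat N x y h τ xK yK *ᵥ v) =
      (shoelace N x y / h ^ 2) *
        ((PiStar N x y h *ᵥ v) 1 ^ 2 + (PiStar N x y h *ᵥ v) 2 ^ 2) +
      τ * ∑ i : ZMod N, (((1 - PiMat N x y h xK yK) *ᵥ v) i) ^ 2 := by
  rw [Kmat, Matrix.add_mulVec, dotProduct_add, Matrix.smul_mulVec,
    dotProduct_smul, smul_eq_mul]
  congr 1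
  · rw [Kconsis, ← Matrix.mulVec_mulVec, ← Matrix.mulVec_mulVec,
      Matrix.dotProduct_mulVec, Matrix.vecMul_transpose]
    rw [dotProduct, Fin.sum_univ_three]
    simp only [Gtil, Matrix.mulVec_diagonal, Matrix.cons_val_zero, Matrix.cons_val_one,
      Matrix.head_cons, Matrix.cons_val_two, Matrix.tail_cons]
    ring
  · congr 1
    rw [← Matrix.mulVec_mulVec, Matrix.dotProduct_mulVec, Matrix.vecMul_transpose,
      dotProduct]
    exact Finset.sum_congr rfl fun i _ => (sq _).symm

lemma piStar_mulVec_one (N : ℕ) [NeZero N] (x y : ZMod N → ℝ) (h : ℝ) (hh : h ≠ 0)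
    (hA : shoelace N x y ≠ 0) :
    PiStar N x y h *ᵥ (fun _ => 1) = ![1, 0, 0] := by
  funext α
  rw [piStar_mulVec N x y h hh hA, bmat_mulVec_one]
  fin_cases α <;> simp

lemma piMat_mulVec_one (N : ℕ) [NeZero N] (x y : ZMod N → ℝ) (h xK yK : ℝ) (hh : h ≠ 0)
    (hA : shoelace N x y ≠ 0) :
    PiMat N x y h xK yK *ᵥ (fun _ => 1) = (fun _ => 1) := by
  rw [PiMat, ← Matrix.mulVec_mulVec, piStar_mulVec_one N x y h hh hA]
  funext i
  simp [Matrix.mulVec, dotProduct, Fin.sum_univ_three, Dmat]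

lemma kmat_mulVec_one (N : ℕ) [NeZero N] (x y : ZMod N → ℝ) (h τ xK yK : ℝ) (hh : h ≠ 0)
    (hA : shoelace N x y ≠ 0) :
    Kmat N x y h τ xK yK *ᵥ (fun _ => 1) = 0 := by
  have hS : (1 - PiMat N x y h xK yK) *ᵥ (fun _ => 1) = 0 := by
    rw [Matrix.sub_mulVec, Matrix.one_mulVec, piMat_mulVec_one N x y h xK yK hh hA, sub_self]
  have hG : Gtil N x y h *ᵥ ![1, 0, 0] = 0 := by
    funext α
    rw [Gtil, Matrix.mulVec_diagonal]
    fin_cases α <;> simp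
  rw [Kmat, Matrix.add_mulVec, Matrix.smul_mulVec, Kconsis,
    ← Matrix.mulVec_mulVec, ← Matrix.mulVec_mulVec, piStar_mulVec_one N x y h hh hA, hG,
    Matrix.mulVec_zero, ← Matrix.mulVec_mulVec, hS, Matrix.mulVec_zero]
  simp

theorem stmt2 (N : ℕ) [NeZero N] (hN : 3 ≤ N) (x y : ZMod N → ℝ)
    (h τ xK yK : ℝ) (hh : 0 < h) (hA : 0 < shoelace N x y) (hτ : 0 < τ) :
    LinearMap.ker (Matrix.toLin' (Kmat N x y h τ xK yK)) =
      Submodule.span ℝ {(fun _ => 1 : ZMod N → ℝ)} ∧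
    Module.finrank ℝ
      ↥(Module.End.eigenspace (Matrix.toLin' (Kmat N x y h τ xK yK)) 0) = 1 ∧
    (∀ μ : ℝ, Module.End.HasEigenvalue (Matrix.toLin' (Kmat N x y h τ xK yK)) μ →
      μ ≠ 0 → 0 < μ) := by
  have hh' : h ≠ 0 := ne_of_gt hh
  have hA' : shoelace N x y ≠ 0 := ne_of_gt hA
  have hAh : 0 < shoelace N x y / h ^ 2 := by positivity
  -- the kernel equality
  have hker : LinearMap.ker (Matrix.toLin' (Kmat N x y h τ xK yK)) =
      Submodule.span ℝ {(fun _ => 1 : ZMod N → ℝ)} := by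
    apply le_antisymm
    · intro v hv
      rw [LinearMap.mem_ker, Matrix.toLin'_apply] at hv
      have hq := quad_form N x y h τ xK yK v
      rw [hv, dotProduct_zero] at hq
      set w := PiStar N x y h *ᵥ v with hw
      set u := (1 - PiMat N x y h xK yK) *ᵥ v with hu
      have h1 : 0 ≤ (shoelace N x y / h ^ 2) * (w 1 ^ 2 + w 2 ^ 2) := by positivity
      have h2 : 0 ≤ τ * ∑ i : ZMod N, u i ^ 2 := by positivity
      have hT1 : (shoelace N x y / h ^ 2) * (w 1 ^ 2 + w 2 ^ 2) = 0 := by linarith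
      have hT2 : τ * ∑ i : ZMod N, u i ^ 2 = 0 := by linarith
      have hw1 : w 1 = 0 := by
        have := (mul_eq_zero.mp hT1).resolve_left (ne_of_gt hAh)
        nlinarith [sq_nonneg (w 1), sq_nonneg (w 2)]
      have hw2 : w 2 = 0 := by
        have := (mul_eq_zero.mp hT1).resolve_left (ne_of_gt hAh)
        nlinarith [sq_nonneg (w 1), sq_nonneg (w 2)]
      have husum : ∑ i : ZMod N, u i ^ 2 = 0 :=
        (mul_eq_zero.mp hT2).resolve_left (ne_of_gt hτ)
      have hu0 : ∀ i : ZMod N, u i = 0 := by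
        intro i
        have := (Finset.sum_eq_zero_iff_of_nonneg
          (fun i _ => sq_nonneg (u i))).mp husum i (Finset.mem_univ i)
        exact pow_eq_zero_iff (n := 2) (by norm_num) |>.mp this
      -- v = Π v = D *ᵥ w = w 0 • 1
      have hveq : ∀ i : ZMod N, v i = w 0 := by
        intro i
        have h0 : u i = 0 := hu0 i
        rw [hu, Matrix.sub_mulVec, Matrix.one_mulVec] at h0
        have : v i = (PiMat N x y h xK yK *ᵥ v) i := by
          have := sub_eq_zero.mp (by simpa using h0)
          exact this
        rw [this, PiMat, ← Matrix.mulVec_mulVec, ← hw]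
        simp [Matrix.mulVec, dotProduct, Fin.sum_univ_three, Dmat, hw1, hw2]
      rw [Submodule.mem_span_singleton]
      exact ⟨w 0, by funext i; simp [hveq i]⟩
    · rw [Submodule.span_le, Set.singleton_subset_iff]
      rw [SetLike.mem_coe, LinearMap.mem_ker, Matrix.toLin'_apply]
      exact kmat_mulVec_one N x y h τ xK yK hh' hA'
  refine ⟨hker, ?_, ?_⟩
  · rw [Module.End.eigenspace_zero, hker]
    apply finrank_span_singleton
    intro hcon
    have := congrFun hcon 0
    simp at this
  · intro μ hμ hμ0
    obtain ⟨v, hv⟩ := hμ.exists_hasEigenvector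
    have happ : Kmat N x y h τ xK yK *ᵥ v = μ • v := by
      rw [← Matrix.toLin'_apply]; exact hv.apply_eq_smul
    have hq := quad_form N x y h τ xK yK v
    rw [happ, dotProduct_smul, smul_eq_mul] at hq
    have hvv : 0 < v ⬝ᵥ v := by
      rcases lt_or_eq_of_le (Finset.sum_nonneg fun i _ => mul_self_nonneg (v i)) with hlt | heq
      · exact hlt
      · exact absurd (dotProduct_self_eq_zero.mp heq.symm) hv.2
    have hQ : 0 ≤ μ * (v ⬝ᵥ v) := by
      rw [hq]; positivity
    have : 0 ≤ μ := nonneg_of_mul_nonneg_left hQ hvv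
    exact lt_of_le_of_ne this (Ne.symm hμ0)

end
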